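/- Let S_0, …, S_8 be a Cl⁺(9)-system on ℝ^16 and let A(Q) = Σ_{i=0}^{8} S_iQS_i. Then A is self-adjoint with respect to the trace inner product on End(ℝ^16), and for every 0 ≤ k ≤ 4 and every Q ∈ L_k one has A(Q) = (−1)^k(9 − 2k)·Q; the subspaces L_0, L_1, L_2, L_3, L_4 are precisely the eigenspaces of A, with the pairwise distinct eigenvalues 9, −7, 5, −3, 1 respectively. In particular, Sym(ℝ^16) and Skew(ℝ^16) are invariant subspaces of A. -/

import Mathlib

abbrev E16 := EuclideanSpace ℝ (Fin 16)

section
variable (S : Fin 9 → (E16 →ₗ[ℝ] E16))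
    (hcl : ∀ i j, S i * S j + S j * S i =
      if i = j then (2 : ℝ) • (1 : E16 →ₗ[ℝ] E16) else 0)

include hcl

lemma Ssq (j : Fin 9) : S j * S j = 1 := by
  have h := hcl j j
  simp only [if_pos rfl] at h
  have h2 : (2:ℝ) • (S j * S j) = (2:ℝ) • (1 : E16 →ₗ[ℝ] E16) := by
    rw [two_smul]; exact h
  exact smul_right_injective _ (two_ne_zero) h2

lemma Santi {i j : Fin 9} (h : i ≠ j) : S j * S i = - (S i * S j) := by
  have h1 := hcl i j
  rw [if_neg h] at h1
  linear_combination (norm := module) h1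

lemma Scomm (j : Fin 9) : ∀ (l : List (Fin 9)), j ∉ l →
    S j * (l.map S).prod = ((-1:ℝ)^l.length) • ((l.map S).prod * S j) := by
  intro l
  induction l with
  | nil => intro _; simp
  | cons i t ih =>
    intro hj
    have hji : j ≠ i := fun h => hj (h ▸ (List.mem_cons_self : i ∈ i :: t))
    have hjt : j ∉ t := fun h => hj (List.mem_cons_of_mem _ h)
    have h1 : S j * S i = -(S i * S j) := Santi S hcl (Ne.symm hji)
    calc S j * ((i :: t).map S).prod = (S j * S i) * (t.map S).prod := by
          simp [mul_assoc]
    _ = -(S i * (S j * (t.map S).prod)) := by rw [h1]; simp [mul_assoc]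
    _ = -(S i * (((-1:ℝ)^t.length) • ((t.map S).prod * S j))) := by rw [ih hjt]
    _ = ((-1:ℝ)^(i::t).length) • (((i :: t).map S).prod * S j) := by
          simp [pow_succ, mul_assoc, mul_smul_comm]

lemma Scomm' (j : Fin 9) (l : List (Fin 9)) (hj : j ∉ l) :
    (l.map S).prod * S j = ((-1:ℝ)^l.length) • (S j * (l.map S).prod) := by
  rw [Scomm S hcl j l hj, smul_smul, ← pow_add, ← two_mul, pow_mul]
  simp

/-- Conjugation: S j * P_l * S j = ± P_l -/
lemma Sconj (j : Fin 9) (l : List (Fin 9)) (hnd : l.Nodup) :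
    S j * (l.map S).prod * S j
      = (if j ∈ l then (-1:ℝ)^(l.length+1) else (-1:ℝ)^l.length) • (l.map S).prod := by
  by_cases hj : j ∈ l
  · rw [if_pos hj]
    obtain ⟨a, b, rfl⟩ := List.append_of_mem hj
    have hna : j ∉ a := by
      have := List.Nodup.notMem ((List.nodup_append'.mp hnd).2.1)
      intro h
      exact ((List.nodup_append'.mp hnd).2.2) h (List.mem_cons_self : j ∈ j :: b)
    have hnb : j ∉ b := List.Nodup.notMem ((List.nodup_append'.mp hnd).2.1)
    have hprod : ((a ++ j :: b).map S).prod
        = (a.map S).prod * (S j * (b.map S).prod) := by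
      simp [List.prod_append]
    rw [hprod]
    have e1 : S j * ((a.map S).prod * (S j * (b.map S).prod)) * S j
        = (S j * (a.map S).prod) * S j * ((b.map S).prod * S j) := by
      simp [mul_assoc]
    rw [e1, Scomm S hcl j a hna, Scomm' S hcl j b hnb]
    rw [smul_mul_assoc, smul_mul_assoc, mul_smul_comm, smul_smul]
    rw [show (-1:ℝ)^a.length * (-1:ℝ)^b.length = (-1:ℝ)^((a++j::b).length+1) by
      rw [List.length_append, List.length_cons]; ring]
    congr 1
    rw [mul_assoc ((a.map S).prod) (S j) (S j), Ssq S hcl, mul_one]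
  · rw [if_neg hj, Scomm S hcl j l hj, smul_mul_assoc, mul_assoc, Ssq S hcl, mul_one]
/-- A acting on a product over a nodup list. -/
lemma Asum (l : List (Fin 9)) (hnd : l.Nodup) :
    ∑ j : Fin 9, S j * (l.map S).prod * S j
      = ((-1:ℝ)^l.length * (9 - 2 * (l.length : ℝ))) • (l.map S).prod := by
  have hcard : l.toFinset.card = l.length := List.toFinset_card_of_nodup hnd
  have : ∀ j : Fin 9, S j * (l.map S).prod * S j
      = (if j ∈ l.toFinset then (-1:ℝ)^(l.length+1) else (-1:ℝ)^l.length) • (l.map S).prod := by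
    intro j; rw [Sconj S hcl j l hnd]; simp
  rw [Finset.sum_congr rfl (fun j _ => this j), ← Finset.sum_smul]
  congr 1
  have hle : l.length ≤ 9 := by
    have := Finset.card_le_card (Finset.subset_univ l.toFinset)
    simpa [hcard] using this
  rw [Finset.sum_ite, Finset.sum_const, Finset.sum_const, Finset.filter_univ_mem,
    Finset.filter_not, Finset.filter_univ_mem, hcard]
  have hc2 : (Finset.univ \ l.toFinset).card = 9 - l.length := by
    rw [Finset.card_sdiff_of_subset (Finset.subset_univ _), hcard]; simp
  rw [hc2]
  simp only [nsmul_eq_mul]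
  have h9 : ((9 - l.length : ℕ) : ℝ) = 9 - (l.length : ℝ) := by
    push_cast [Nat.cast_sub hle]; ring
  rw [h9, pow_succ]
  ring

lemma trace_conj (j : Fin 9) (P : E16 →ₗ[ℝ] E16) :
    LinearMap.trace ℝ E16 (S j * P * S j) = LinearMap.trace ℝ E16 P := by
  rw [LinearMap.trace_mul_comm ℝ (S j * P) (S j), ← mul_assoc, Ssq S hcl, one_mul]

lemma trace_one16 : LinearMap.trace ℝ E16 (1 : E16 →ₗ[ℝ] E16) = 16 := by
  rw [LinearMap.trace_one]; simp [finrank_euclideanSpace]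

/-- Trace of a nonempty reduced product vanishes (length ≤ 8). -/
lemma trace_prod_zero (l : List (Fin 9)) (hnd : l.Nodup) (hne : l ≠ [])
    (hlen : l.length ≤ 8) : LinearMap.trace ℝ E16 (l.map S).prod = 0 := by
  rcases Nat.even_or_odd l.length with hpar | hpar
  · obtain ⟨j, t, rfl⟩ := List.exists_cons_of_ne_nil hne
    have h := congrArg (LinearMap.trace ℝ E16) (Sconj S hcl j (j::t) hnd)
    rw [trace_conj S hcl, if_pos (List.mem_cons_self : j ∈ j :: t), map_smul, smul_eq_mul,
      (Even.add_one hpar).neg_one_pow] at h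
    linarith
  · have hex : ∃ j : Fin 9, j ∉ l := by
      by_contra hc; push_neg at hc
      have h1 : l.toFinset = Finset.univ :=
        Finset.eq_univ_iff_forall.mpr (fun j => List.mem_toFinset.mpr (hc j))
      have h2 := congrArg Finset.card h1
      rw [List.toFinset_card_of_nodup hnd] at h2
      simp at h2; omega
    obtain ⟨j, hj⟩ := hex
    have h := congrArg (LinearMap.trace ℝ E16) (Sconj S hcl j l hnd)
    rw [trace_conj S hcl, if_neg hj, map_smul, smul_eq_mul, hpar.neg_one_pow] at h
    linarith
/-- Square of a reduced product is ±1. -/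
lemma prod_sq (l : List (Fin 9)) (hnd : l.Nodup) :
    ∃ ε : ℝ, (ε = 1 ∨ ε = -1) ∧ (l.map S).prod * (l.map S).prod = ε • 1 := by
  induction l with
  | nil => exact ⟨1, Or.inl rfl, by simp⟩
  | cons j t ih =>
    obtain ⟨ε, hε, hsq⟩ := ih (List.Nodup.of_cons hnd)
    refine ⟨(-1:ℝ)^t.length * ε, ?_, ?_⟩
    · rcases hε with h | h <;> rcases Nat.even_or_odd t.length with hp | hp <;>
        simp [h, hp.neg_one_pow] <;> simp [hp.neg_one_pow]
    · have hj : j ∉ t := (List.nodup_cons.mp hnd).1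
      have : ((j::t).map S).prod * ((j::t).map S).prod
          = (S j * (t.map S).prod * S j) * (t.map S).prod := by
        simp [mul_assoc]
      rw [this, Sconj S hcl j t ((List.nodup_cons.mp hnd).2), if_neg hj,
        smul_mul_assoc, hsq, smul_smul]

/-- Orthogonality of distinct reduced products, lengths ≤ 4. -/
lemma trace_orth (l₁ l₂ : List (Fin 9)) (h₁ : l₁.Nodup) (h₂ : l₂.Nodup)
    (hl₁ : l₁.length ≤ 4) (hl₂ : l₂.length ≤ 4) (hne : l₁.toFinset ≠ l₂.toFinset) :
    LinearMap.trace ℝ E16 ((l₁.map S).prod * (l₂.map S).prod) = 0 := by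
  have key : ∀ j : Fin 9,
      LinearMap.trace ℝ E16 ((l₁.map S).prod * (l₂.map S).prod)
      = (if j ∈ l₁ then (-1:ℝ)^(l₁.length+1) else (-1:ℝ)^l₁.length)
        * ((if j ∈ l₂ then (-1:ℝ)^(l₂.length+1) else (-1:ℝ)^l₂.length)
        * LinearMap.trace ℝ E16 ((l₁.map S).prod * (l₂.map S).prod)) := by
    intro j
    have e : S j * ((l₁.map S).prod * (l₂.map S).prod) * S j
        = (S j * (l₁.map S).prod * S j) * (S j * (l₂.map S).prod * S j) := by
      simp only [mul_assoc]
      rw [show S j * (S j * ((l₂.map S).prod * S j)) = (l₂.map S).prod * S j from by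
        rw [← mul_assoc, Ssq S hcl, one_mul]]
    have h := congrArg (LinearMap.trace ℝ E16) e
    rw [trace_conj S hcl, Sconj S hcl j l₁ h₁, Sconj S hcl j l₂ h₂,
      smul_mul_assoc, mul_smul_comm, map_smul, map_smul, smul_eq_mul, smul_eq_mul] at h
    exact h
  rcases Nat.even_or_odd (l₁.length + l₂.length) with hpar | hpar
  · -- pick j in exactly one of the two
    have hex : ∃ j : Fin 9, (j ∈ l₁ ∧ j ∉ l₂) ∨ (j ∈ l₂ ∧ j ∉ l₁) := by
      by_contra hc; push_neg at hc
      apply hne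
      ext j
      simp only [List.mem_toFinset]
      exact ⟨(hc j).1, (hc j).2⟩
    obtain ⟨j, hj⟩ := hex
    have h := key j
    obtain ⟨m, hm⟩ := hpar
    rcases hj with ⟨hj1, hj2⟩ | ⟨hj1, hj2⟩
    · rw [if_pos hj1, if_neg hj2, ← mul_assoc, ← pow_add] at h
      rw [Odd.neg_one_pow ⟨m, by omega⟩] at h
      linarith
    · rw [if_neg hj2, if_pos hj1, ← mul_assoc, ← pow_add] at h
      rw [Odd.neg_one_pow ⟨m, by omega⟩] at h
      linarith
  · -- pick j outside both
    have hex : ∃ j : Fin 9, j ∉ l₁ ∧ j ∉ l₂ := by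
      by_contra hc; push_neg at hc
      have hsub : (Finset.univ : Finset (Fin 9)) ⊆ l₁.toFinset ∪ l₂.toFinset := by
        intro j _
        rcases Classical.em (j ∈ l₁) with h | h
        · exact Finset.mem_union_left _ (List.mem_toFinset.mpr h)
        · exact Finset.mem_union_right _ (List.mem_toFinset.mpr (hc j h))
      have := Finset.card_le_card hsub
      have hu := Finset.card_union_le l₁.toFinset l₂.toFinset
      rw [List.toFinset_card_of_nodup h₁, List.toFinset_card_of_nodup h₂] at hu
      simp at this
      omega
    obtain ⟨j, hj1, hj2⟩ := hex
    have h := key j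
    rw [if_neg hj1, if_neg hj2, ← mul_assoc, ← pow_add, hpar.neg_one_pow] at h
    linarith
omit hcl in
set_option maxRecDepth 10000 in
lemma card_idx : Fintype.card {T : Finset (Fin 9) // T.card ≤ 4} = 256 := by decide

lemma lin_indep :
    LinearIndependent ℝ (fun T : {T : Finset (Fin 9) // T.card ≤ 4} =>
      ((T.1.sort (·≤·)).map S).prod) := by
  rw [Fintype.linearIndependent_iff]
  intro g hg U
  have tr := congrArg (fun P => LinearMap.trace ℝ E16
    (((U.1.sort (·≤·)).map S).prod * P)) hg
  simp only [Finset.mul_sum, mul_smul_comm, map_sum, map_smul, smul_eq_mul,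
    map_zero, mul_zero] at tr
  rw [Finset.sum_eq_single U] at tr
  · obtain ⟨ε, hε, hsq⟩ := prod_sq S hcl (U.1.sort (·≤·)) (U.1.sort_nodup (·≤·))
    rw [hsq, map_smul, smul_eq_mul, trace_one16 S hcl] at tr
    have : ε * 16 ≠ 0 := by rcases hε with h | h <;> rw [h] <;> norm_num
    rcases mul_eq_zero.mp tr with h | h
    · exact h
    · exact absurd h this
  · intro T _ hTU
    have horth := trace_orth S hcl (U.1.sort (·≤·)) (T.1.sort (·≤·))
      (U.1.sort_nodup (·≤·)) (T.1.sort_nodup (·≤·))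
      (by rw [Finset.length_sort]; exact U.2) (by rw [Finset.length_sort]; exact T.2)
      (by rw [Finset.sort_toFinset, Finset.sort_toFinset]
          exact fun h => hTU (Subtype.ext h.symm))
    rw [horth, mul_zero]
  · intro h; exact absurd (Finset.mem_univ U) h

lemma span_top (L : ℕ → Submodule ℝ (E16 →ₗ[ℝ] E16))
    (hL : ∀ k, L k = Submodule.span ℝ
      {P | ∃ l : List (Fin 9), l.Pairwise (· < ·) ∧ l.length = k ∧ P = (l.map S).prod}) :
    L 0 ⊔ L 1 ⊔ L 2 ⊔ L 3 ⊔ L 4 = ⊤ := by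
  have hfr : Module.finrank ℝ (E16 →ₗ[ℝ] E16) = 256 := by
    rw [Module.finrank_linearMap]
    simp [finrank_euclideanSpace]
  have hcard : Fintype.card {T : Finset (Fin 9) // T.card ≤ 4}
      = Module.finrank ℝ (E16 →ₗ[ℝ] E16) := by rw [hfr, card_idx]
  haveI : Nonempty {T : Finset (Fin 9) // T.card ≤ 4} := ⟨⟨∅, by simp⟩⟩
  let b := basisOfLinearIndependentOfCardEqFinrank (lin_indep S hcl) hcard
  have hb : ⇑b = (fun T : {T : Finset (Fin 9) // T.card ≤ 4} =>
      ((T.1.sort (·≤·)).map S).prod) := coe_basisOfLinearIndependentOfCardEqFinrank _ _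
  have hspan := b.span_eq
  rw [hb] at hspan
  apply top_unique
  rw [← hspan]
  apply Submodule.span_le.mpr
  rintro - ⟨T, rfl⟩
  have hmem : ((T.1.sort (·≤·)).map S).prod ∈ L T.1.card := by
    rw [hL]
    exact Submodule.subset_span ⟨T.1.sort (·≤·), T.1.sortedLT_sort.pairwise,
      Finset.length_sort _, rfl⟩
  have hle : L T.1.card ≤ L 0 ⊔ L 1 ⊔ L 2 ⊔ L 3 ⊔ L 4 := by
    have h4 := T.2
    interval_cases h : T.1.card
    · exact le_sup_of_le_left (le_sup_of_le_left (le_sup_of_le_left le_sup_left))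
    · exact le_sup_of_le_left (le_sup_of_le_left (le_sup_of_le_left le_sup_right))
    · exact le_sup_of_le_left (le_sup_of_le_left le_sup_right)
    · exact le_sup_of_le_left le_sup_right
    · exact le_sup_right
  exact hle hmem
end

section Main
variable (S : Fin 9 → (E16 →ₗ[ℝ] E16))
    (hcl : ∀ i j, S i * S j + S j * S i =
      if i = j then (2 : ℝ) • (1 : E16 →ₗ[ℝ] E16) else 0)
    (A : (E16 →ₗ[ℝ] E16) → (E16 →ₗ[ℝ] E16))
    (hA : ∀ Q, A Q = ∑ i, S i * Q * S i)

include hcl hA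

lemma part2 (L : ℕ → Submodule ℝ (E16 →ₗ[ℝ] E16))
    (hL : ∀ k, L k = Submodule.span ℝ
      {P | ∃ l : List (Fin 9), l.Pairwise (· < ·) ∧ l.length = k ∧ P = (l.map S).prod})
    (k : ℕ) : ∀ Q ∈ L k, A Q = ((-1 : ℝ) ^ k * (9 - 2 * (k : ℝ))) • Q := by
  intro Q hQ
  rw [hL k] at hQ
  refine Submodule.span_induction ?_ ?_ ?_ ?_ hQ
  · rintro P ⟨l, hs, hlen, rfl⟩
    rw [← hlen, hA]
    exact Asum S hcl l hs.nodup
  · rw [hA]; simp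
  · intro x y _ _ hx hy
    have : A (x + y) = A x + A y := by
      simp [hA, mul_add, add_mul, Finset.sum_add_distrib]
    rw [this, hx, hy, smul_add]
  · intro a x _ hx
    have : A (a • x) = a • A x := by
      simp [hA, Finset.smul_sum, mul_smul_comm, smul_mul_assoc]
    rw [this, hx, smul_comm]
end Main


set_option maxHeartbeats 1000000 in
/-- Lemma 3(2): for a `Cl⁺(9)`-system on `ℝ¹⁶`, the operator `𝒜(Q) = Σᵢ SᵢQSᵢ` is
self-adjoint for the trace inner product, acts on `L_k` (`0 ≤ k ≤ 4`) as the scalar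
`(−1)^k(9 − 2k)`, its eigenspaces are precisely the `L_k`, and it preserves the symmetric
and the skew-symmetric endomorphisms. -/
theorem stmt8 (S : Fin 9 → (E16 →ₗ[ℝ] E16))
    (hsymm : ∀ i, LinearMap.adjoint (S i) = S i)
    (hcl : ∀ i j, S i * S j + S j * S i =
      if i = j then (2 : ℝ) • (1 : E16 →ₗ[ℝ] E16) else 0)
    (L : ℕ → Submodule ℝ (E16 →ₗ[ℝ] E16))
    (hL : ∀ k, L k = Submodule.span ℝ
      {P | ∃ l : List (Fin 9), l.Pairwise (· < ·) ∧ l.length = k ∧ P = (l.map S).prod})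
    (A : (E16 →ₗ[ℝ] E16) → (E16 →ₗ[ℝ] E16))
    (hA : ∀ Q, A Q = ∑ i, S i * Q * S i) :
    (∀ P Q, LinearMap.trace ℝ E16 (A P * LinearMap.adjoint Q)
      = LinearMap.trace ℝ E16 (P * LinearMap.adjoint (A Q))) ∧
    (∀ k ≤ 4, ∀ Q ∈ L k, A Q = ((-1 : ℝ) ^ k * (9 - 2 * (k : ℝ))) • Q) ∧
    (∀ (μ : ℝ) (Q : E16 →ₗ[ℝ] E16), Q ≠ 0 → A Q = μ • Q →
      ∃ k : ℕ, k ≤ 4 ∧ μ = (-1 : ℝ) ^ k * (9 - 2 * (k : ℝ)) ∧ Q ∈ L k) ∧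
    (∀ Q, LinearMap.adjoint Q = Q → LinearMap.adjoint (A Q) = A Q) ∧
    (∀ Q, LinearMap.adjoint Q = -Q → LinearMap.adjoint (A Q) = -(A Q)) := by
  have hs : ∀ i, star (S i) = S i := fun i => by
    rw [LinearMap.star_eq_adjoint, hsymm]
  have hAdj : ∀ R, LinearMap.adjoint (A R) = A (LinearMap.adjoint R) := by
    intro R
    rw [hA, hA, ← LinearMap.star_eq_adjoint, star_sum]
    refine Finset.sum_congr rfl fun i _ => ?_
    rw [star_mul, star_mul, hs i, ← LinearMap.star_eq_adjoint, mul_assoc]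
  have hAadd : ∀ x y, A (x + y) = A x + A y := by
    intro x y; simp [hA, mul_add, add_mul, Finset.sum_add_distrib]
  have hAsmul : ∀ (c : ℝ) x, A (c • x) = c • A x := by
    intro c x; simp [hA, Finset.smul_sum, mul_smul_comm, smul_mul_assoc]
  have hA0 : A 0 = 0 := by rw [hA]; simp
  refine ⟨?_, fun k _ => part2 S hcl A hA L hL k, ?_, ?_, ?_⟩
  · -- trace self-adjointness
    intro P Q
    rw [hAdj Q, hA P, hA (LinearMap.adjoint Q), Finset.sum_mul, Finset.mul_sum,
      map_sum, map_sum]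
    refine Finset.sum_congr rfl fun i _ => ?_
    simp only [mul_assoc]
    rw [LinearMap.trace_mul_comm ℝ (S i) (P * (S i * LinearMap.adjoint Q))]
    simp only [mul_assoc]
  · -- eigenspaces
    intro μ Q hQ0 hQA
    have htop := span_top S hcl L hL
    have hQmem : Q ∈ L 0 ⊔ L 1 ⊔ L 2 ⊔ L 3 ⊔ L 4 := htop ▸ Submodule.mem_top
    obtain ⟨y3, hy3, Q4, hQ4, hq4⟩ := Submodule.mem_sup.mp hQmem
    obtain ⟨y2, hy2, Q3, hQ3, hq3⟩ := Submodule.mem_sup.mp hy3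
    obtain ⟨y1, hy1, Q2, hQ2, hq2⟩ := Submodule.mem_sup.mp hy2
    obtain ⟨Q0, hQ0m, Q1, hQ1, hq1⟩ := Submodule.mem_sup.mp hy1
    have hsum : Q0 + Q1 + Q2 + Q3 + Q4 = Q := by
      rw [← hq4, ← hq3, ← hq2, ← hq1]
    have e0 : A Q0 = (9:ℝ) • Q0 := by
      rw [part2 S hcl A hA L hL 0 Q0 hQ0m]; norm_num
    have e1 : A Q1 = (-7:ℝ) • Q1 := by
      rw [part2 S hcl A hA L hL 1 Q1 hQ1]; norm_num
    have e2 : A Q2 = (5:ℝ) • Q2 := by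
      rw [part2 S hcl A hA L hL 2 Q2 hQ2]; norm_num
    have e3 : A Q3 = (-3:ℝ) • Q3 := by
      rw [part2 S hcl A hA L hL 3 Q3 hQ3]; norm_num
    have e4 : A Q4 = (1:ℝ) • Q4 := by
      rw [part2 S hcl A hA L hL 4 Q4 hQ4]; norm_num
    have key : (9:ℝ)•Q0 + (-7:ℝ)•Q1 + (5:ℝ)•Q2 + (-3:ℝ)•Q3 + (1:ℝ)•Q4
        = μ•Q0 + μ•Q1 + μ•Q2 + μ•Q3 + μ•Q4 := by
      have h1 : (9:ℝ)•Q0 + (-7:ℝ)•Q1 + (5:ℝ)•Q2 + (-3:ℝ)•Q3 + (1:ℝ)•Q4 = A Q := by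
        rw [← hsum, hAadd, hAadd, hAadd, hAadd, e0, e1, e2, e3, e4]
      rw [h1, hQA, ← hsum]
      module
    obtain ⟨v0, hv0⟩ : ∃ v, v = ((9:ℝ) - μ) • Q0 := ⟨_, rfl⟩
    obtain ⟨v1, hv1⟩ : ∃ v, v = ((-7:ℝ) - μ) • Q1 := ⟨_, rfl⟩
    obtain ⟨v2, hv2⟩ : ∃ v, v = ((5:ℝ) - μ) • Q2 := ⟨_, rfl⟩
    obtain ⟨v3, hv3⟩ : ∃ v, v = ((-3:ℝ) - μ) • Q3 := ⟨_, rfl⟩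
    obtain ⟨v4, hv4⟩ : ∃ v, v = ((1:ℝ) - μ) • Q4 := ⟨_, rfl⟩
    have a0 : A v0 = (9:ℝ) • v0 := by rw [hv0, hAsmul, e0, smul_comm]
    have a1 : A v1 = (-7:ℝ) • v1 := by rw [hv1, hAsmul, e1, smul_comm]
    have a2 : A v2 = (5:ℝ) • v2 := by rw [hv2, hAsmul, e2, smul_comm]
    have a3 : A v3 = (-3:ℝ) • v3 := by rw [hv3, hAsmul, e3, smul_comm]
    have a4 : A v4 = (1:ℝ) • v4 := by rw [hv4, hAsmul, e4, smul_comm]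
    have m0 : v0 + v1 + v2 + v3 + v4 = 0 := by
      have heq : v0 + v1 + v2 + v3 + v4
          = ((9:ℝ)•Q0 + (-7:ℝ)•Q1 + (5:ℝ)•Q2 + (-3:ℝ)•Q3 + (1:ℝ)•Q4)
            - (μ•Q0 + μ•Q1 + μ•Q2 + μ•Q3 + μ•Q4) := by
        rw [hv0, hv1, hv2, hv3, hv4]; module
      rw [heq, key, sub_self]
    have m1 : (9:ℝ)•v0 + (-7:ℝ)•v1 + (5:ℝ)•v2 + (-3:ℝ)•v3 + (1:ℝ)•v4 = 0 := by
      have h := congrArg A m0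
      rw [hAadd, hAadd, hAadd, hAadd, a0, a1, a2, a3, a4, hA0] at h
      exact h
    have m2 : (81:ℝ)•v0 + (49:ℝ)•v1 + (25:ℝ)•v2 + (9:ℝ)•v3 + (1:ℝ)•v4 = 0 := by
      have h := congrArg A m1
      rw [hAadd, hAadd, hAadd, hAadd, hAsmul, hAsmul, hAsmul, hAsmul, hAsmul,
        a0, a1, a2, a3, a4, hA0] at h
      rw [← h]; module
    have m3 : (729:ℝ)•v0 + (-343:ℝ)•v1 + (125:ℝ)•v2 + (-27:ℝ)•v3 + (1:ℝ)•v4 = 0 := by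
      have h := congrArg A m2
      rw [hAadd, hAadd, hAadd, hAadd, hAsmul, hAsmul, hAsmul, hAsmul, hAsmul,
        a0, a1, a2, a3, a4, hA0] at h
      rw [← h]; module
    have m4 : (6561:ℝ)•v0 + (2401:ℝ)•v1 + (625:ℝ)•v2 + (81:ℝ)•v3 + (1:ℝ)•v4 = 0 := by
      have h := congrArg A m3
      rw [hAadd, hAadd, hAadd, hAadd, hAsmul, hAsmul, hAsmul, hAsmul, hAsmul,
        a0, a1, a2, a3, a4, hA0] at h
      rw [← h]; module
    have z0 : ((9:ℝ) - μ) • Q0 = 0 := by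
      rw [← hv0]
      have hz : v0 = (35/2048:ℝ) • (v0 + v1 + v2 + v3 + v4)
          + (-19/1536:ℝ) • ((9:ℝ)•v0 + (-7:ℝ)•v1 + (5:ℝ)•v2 + (-3:ℝ)•v3 + (1:ℝ)•v4)
          + (-17/3072:ℝ) • ((81:ℝ)•v0 + (49:ℝ)•v1 + (25:ℝ)•v2 + (9:ℝ)•v3 + (1:ℝ)•v4)
          + (1/1536:ℝ) • ((729:ℝ)•v0 + (-343:ℝ)•v1 + (125:ℝ)•v2 + (-27:ℝ)•v3 + (1:ℝ)•v4)
          + (1/6144:ℝ) • ((6561:ℝ)•v0 + (2401:ℝ)•v1 + (625:ℝ)•v2 + (81:ℝ)•v3 + (1:ℝ)•v4) := by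
        module
      rw [m0, m1, m2, m3, m4] at hz
      simpa using hz
    have z1 : ((-7:ℝ) - μ) • Q1 = 0 := by
      rw [← hv1]
      have hz : v1 = (-45/2048:ℝ) • (v0 + v1 + v2 + v3 + v4)
          + (11/512:ℝ) • ((9:ℝ)•v0 + (-7:ℝ)•v1 + (5:ℝ)•v2 + (-3:ℝ)•v3 + (1:ℝ)•v4)
          + (7/3072:ℝ) • ((81:ℝ)•v0 + (49:ℝ)•v1 + (25:ℝ)•v2 + (9:ℝ)•v3 + (1:ℝ)•v4)
          + (-1/512:ℝ) • ((729:ℝ)•v0 + (-343:ℝ)•v1 + (125:ℝ)•v2 + (-27:ℝ)•v3 + (1:ℝ)•v4)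
          + (1/6144:ℝ) • ((6561:ℝ)•v0 + (2401:ℝ)•v1 + (625:ℝ)•v2 + (81:ℝ)•v3 + (1:ℝ)•v4) := by
        module
      rw [m0, m1, m2, m3, m4] at hz
      simpa using hz
    have z2 : ((5:ℝ) - μ) • Q2 = 0 := by
      rw [← hv2]
      have hz : v2 = (-63/512:ℝ) • (v0 + v1 + v2 + v3 + v4)
          + (5/64:ℝ) • ((9:ℝ)•v0 + (-7:ℝ)•v1 + (5:ℝ)•v2 + (-3:ℝ)•v3 + (1:ℝ)•v4)
          + (35/768:ℝ) • ((81:ℝ)•v0 + (49:ℝ)•v1 + (25:ℝ)•v2 + (9:ℝ)•v3 + (1:ℝ)•v4)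
          + (0:ℝ) • ((729:ℝ)•v0 + (-343:ℝ)•v1 + (125:ℝ)•v2 + (-27:ℝ)•v3 + (1:ℝ)•v4)
          + (-1/1536:ℝ) • ((6561:ℝ)•v0 + (2401:ℝ)•v1 + (625:ℝ)•v2 + (81:ℝ)•v3 + (1:ℝ)•v4) := by
        module
      rw [m0, m1, m2, m3, m4] at hz
      simpa using hz
    have z3 : ((-3:ℝ) - μ) • Q3 = 0 := by
      rw [← hv3]
      have hz : v3 = (105/512:ℝ) • (v0 + v1 + v2 + v3 + v4)
          + (-23/96:ℝ) • ((9:ℝ)•v0 + (-7:ℝ)•v1 + (5:ℝ)•v2 + (-3:ℝ)•v3 + (1:ℝ)•v4)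
          + (23/768:ℝ) • ((81:ℝ)•v0 + (49:ℝ)•v1 + (25:ℝ)•v2 + (9:ℝ)•v3 + (1:ℝ)•v4)
          + (1/192:ℝ) • ((729:ℝ)•v0 + (-343:ℝ)•v1 + (125:ℝ)•v2 + (-27:ℝ)•v3 + (1:ℝ)•v4)
          + (-1/1536:ℝ) • ((6561:ℝ)•v0 + (2401:ℝ)•v1 + (625:ℝ)•v2 + (81:ℝ)•v3 + (1:ℝ)•v4) := by
        module
      rw [m0, m1, m2, m3, m4] at hz
      simpa using hz
    have z4 : ((1:ℝ) - μ) • Q4 = 0 := by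
      rw [← hv4]
      have hz : v4 = (945/1024:ℝ) • (v0 + v1 + v2 + v3 + v4)
          + (39/256:ℝ) • ((9:ℝ)•v0 + (-7:ℝ)•v1 + (5:ℝ)•v2 + (-3:ℝ)•v3 + (1:ℝ)•v4)
          + (-37/512:ℝ) • ((81:ℝ)•v0 + (49:ℝ)•v1 + (25:ℝ)•v2 + (9:ℝ)•v3 + (1:ℝ)•v4)
          + (-1/256:ℝ) • ((729:ℝ)•v0 + (-343:ℝ)•v1 + (125:ℝ)•v2 + (-27:ℝ)•v3 + (1:ℝ)•v4)
          + (1/1024:ℝ) • ((6561:ℝ)•v0 + (2401:ℝ)•v1 + (625:ℝ)•v2 + (81:ℝ)•v3 + (1:ℝ)•v4) := by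
        module
      rw [m0, m1, m2, m3, m4] at hz
      simpa using hz
    have w0 := smul_eq_zero.mp z0
    have w1 := smul_eq_zero.mp z1
    have w2 := smul_eq_zero.mp z2
    have w3 := smul_eq_zero.mp z3
    have w4 := smul_eq_zero.mp z4
    by_cases c0 : Q0 = 0
    · by_cases c1 : Q1 = 0
      · by_cases c2 : Q2 = 0
        · by_cases c3 : Q3 = 0
          · by_cases c4 : Q4 = 0
            · exfalso; apply hQ0; rw [← hsum, c0, c1, c2, c3, c4]; simp
            · -- μ = 1, k = 4
              have hμ : μ = 1 := by
                rcases w4 with h | h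
                · linarith
                · exact absurd h c4
              refine ⟨4, by norm_num, by rw [hμ]; norm_num, ?_⟩
              have : Q = Q4 := by rw [← hsum, c0, c1, c2, c3]; simp
              rw [this]; exact hQ4
          · have hμ : μ = -3 := by
              rcases w3 with h | h
              · linarith
              · exact absurd h c3
            have c4 : Q4 = 0 := by
              rcases w4 with h | h
              · exfalso; rw [hμ] at h; norm_num at h
              · exact h
            refine ⟨3, by norm_num, by rw [hμ]; norm_num, ?_⟩
            have : Q = Q3 := by rw [← hsum, c0, c1, c2, c4]; simp
            rw [this]; exact hQ3
        · have hμ : μ = 5 := by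
            rcases w2 with h | h
            · linarith
            · exact absurd h c2
          have c3 : Q3 = 0 := by
            rcases w3 with h | h
            · exfalso; rw [hμ] at h; norm_num at h
            · exact h
          have c4 : Q4 = 0 := by
            rcases w4 with h | h
            · exfalso; rw [hμ] at h; norm_num at h
            · exact h
          refine ⟨2, by norm_num, by rw [hμ]; norm_num, ?_⟩
          have : Q = Q2 := by rw [← hsum, c0, c1, c3, c4]; simp
          rw [this]; exact hQ2
      · have hμ : μ = -7 := by
          rcases w1 with h | h
          · linarith
          · exact absurd h c1
        have c2 : Q2 = 0 := by
          rcases w2 with h | h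
          · exfalso; rw [hμ] at h; norm_num at h
          · exact h
        have c3 : Q3 = 0 := by
          rcases w3 with h | h
          · exfalso; rw [hμ] at h; norm_num at h
          · exact h
        have c4 : Q4 = 0 := by
          rcases w4 with h | h
          · exfalso; rw [hμ] at h; norm_num at h
          · exact h
        refine ⟨1, by norm_num, by rw [hμ]; norm_num, ?_⟩
        have : Q = Q1 := by rw [← hsum, c0, c2, c3, c4]; simp
        rw [this]; exact hQ1
    · have hμ : μ = 9 := by
        rcases w0 with h | h
        · linarith
        · exact absurd h c0
      have c1 : Q1 = 0 := by
        rcases w1 with h | h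
        · exfalso; rw [hμ] at h; norm_num at h
        · exact h
      have c2 : Q2 = 0 := by
        rcases w2 with h | h
        · exfalso; rw [hμ] at h; norm_num at h
        · exact h
      have c3 : Q3 = 0 := by
        rcases w3 with h | h
        · exfalso; rw [hμ] at h; norm_num at h
        · exact h
      have c4 : Q4 = 0 := by
        rcases w4 with h | h
        · exfalso; rw [hμ] at h; norm_num at h
        · exact h
      refine ⟨0, by norm_num, by rw [hμ]; norm_num, ?_⟩
      have : Q = Q0 := by rw [← hsum, c1, c2, c3, c4]; simp
      rw [this]; exact hQ0m
  · intro Q hQ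
    rw [hAdj Q, hQ]
  · intro Q hQ
    rw [hAdj Q, hQ]
    have : A (-Q) = -(A Q) := by simp [hA, mul_neg, neg_mul]
    rw [this]
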